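/- arXiv:1605.01028 — 8 statements merged into one kernel-verified Lean document; each statement's English description precedes it below -/
import Mathlib

section
/- The function g is differentiable on (0,∞) and satisfies g'(x) = g(x)²/(2(g(x) − 1)) for all x > 0; in particular g'(x) < 0 and equivalently g'(x)·(1/g(x) − 1/g(x)²) = 1/2 for all x > 0. -/
open Real Filter Topology

noncomputable def F : ℝ → ℝ := fun y => 2 / y + 2 * Real.log y - 2

lemma hasDerivAt_F {y : ℝ} (hy : 0 < y) :
    HasDerivAt F (2 * (y - 1) / y ^ 2) y := by
  have h1 : HasDerivAt (fun y : ℝ => 2 / y) (2 * (-(y ^ 2)⁻¹)) y := by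
    simpa [div_eq_mul_inv] using (hasDerivAt_inv hy.ne').const_mul (2 : ℝ)
  have h2 : HasDerivAt (fun y : ℝ => 2 * Real.log y) (2 * y⁻¹) y :=
    (Real.hasDerivAt_log hy.ne').const_mul 2
  have := (h1.add h2).sub_const 2
  refine HasDerivAt.congr_deriv this ?_
  field_simp
  ring

lemma strictAntiOn_F : StrictAntiOn F (Set.Ioc (0 : ℝ) 1) := by
  apply strictAntiOn_of_deriv_neg (convex_Ioc 0 1)
  · intro y hy
    exact (hasDerivAt_F hy.1).continuousAt.continuousWithinAt
  · intro y hy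
    rw [interior_Ioc] at hy
    rw [(hasDerivAt_F hy.1).deriv]
    apply div_neg_of_neg_of_pos
    · nlinarith [hy.2]
    · exact pow_pos hy.1 2

/-- The implicitly defined `g` is differentiable on `(0,∞)` with
`g'(x) = g(x)² / (2(g(x) − 1))`; in particular `g'(x) < 0` and
`g'(x) · (1/g(x) − 1/g(x)²) = 1/2` for all `x > 0`. -/
theorem stmt_2 (g : ℝ → ℝ)
    (hg : ∀ x : ℝ, 0 ≤ x →
      g x ∈ Set.Ioc (0 : ℝ) 1 ∧ 1 / g x + Real.log (g x) = 1 + x / 2) :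
    ∀ x : ℝ, 0 < x →
      HasDerivAt g ((g x) ^ 2 / (2 * (g x - 1))) x ∧
      deriv g x < 0 ∧
      deriv g x * (1 / g x - 1 / (g x) ^ 2) = 1 / 2 := by
  have hFg : ∀ t : ℝ, 0 ≤ t → F (g t) = t := by
    intro t ht
    obtain ⟨⟨h0, h1⟩, heq⟩ := hg t ht
    have : F (g t) = 2 * (1 / g t + Real.log (g t)) - 2 := by
      simp [F]; ring
    rw [this, heq]; ring
  intro x hx
  obtain ⟨⟨hy0, hy1⟩, heq⟩ := hg x hx.le
  set y₀ := g x with hy₀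
  have hy1' : y₀ < 1 := by
    rcases lt_or_eq_of_le hy1 with h | h
    · exact h
    · exfalso
      rw [h] at heq
      simp at heq
      linarith
  -- continuity of g at x
  have hcont : ContinuousAt g x := by
    rw [Metric.continuousAt_iff]
    intro ε hε
    set ε' := min (ε / 2) (min (y₀ / 2) ((1 - y₀) / 2)) with hε'
    have hε'pos : 0 < ε' := by
      apply lt_min (by linarith) (lt_min (by linarith) (by linarith))
    have hmem1 : y₀ + ε' ∈ Set.Ioc (0 : ℝ) 1 := by
      constructor
      · linarith
      · have h2 : ε' ≤ (1 - y₀) / 2 := le_trans (min_le_right _ _) (min_le_right _ _)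
        linarith
    have hmem2 : y₀ - ε' ∈ Set.Ioc (0 : ℝ) 1 := by
      have h2 : ε' ≤ y₀ / 2 := le_trans (min_le_right _ _) (min_le_left _ _)
      constructor
      · linarith
      · linarith
    have hmem0 : y₀ ∈ Set.Ioc (0 : ℝ) 1 := ⟨hy0, hy1⟩
    have hFx : F y₀ = x := hFg x hx.le
    have ha : F (y₀ + ε') < x := by
      have := strictAntiOn_F hmem0 hmem1 (by linarith)
      linarith
    have hb : x < F (y₀ - ε') := by
      have := strictAntiOn_F hmem2 hmem0 (by linarith)
      linarith
    refine ⟨min (min (x - F (y₀ + ε')) (F (y₀ - ε') - x)) x,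
      lt_min (lt_min (by linarith) (by linarith)) hx, ?_⟩
    intro t ht
    rw [Real.dist_eq] at ht ⊢
    have ht1 : |t - x| < x - F (y₀ + ε') := lt_of_lt_of_le ht (le_trans (min_le_left _ _) (min_le_left _ _))
    have ht2 : |t - x| < F (y₀ - ε') - x := lt_of_lt_of_le ht (le_trans (min_le_left _ _) (min_le_right _ _))
    have ht3 : |t - x| < x := lt_of_lt_of_le ht (min_le_right _ _)
    rw [abs_lt] at ht1 ht2 ht3
    have htpos : 0 < t := by linarith
    have hgt := (hg t htpos.le).1
    have hFgt : F (g t) = t := hFg t htpos.le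
    have hlt : y₀ - ε' < g t := by
      by_contra h
      push_neg at h
      have := strictAntiOn_F.antitoneOn hgt hmem2 h
      rw [hFgt] at this
      linarith
    have hgt' : g t < y₀ + ε' := by
      by_contra h
      push_neg at h
      have := strictAntiOn_F.antitoneOn hmem1 hgt h
      rw [hFgt] at this
      linarith
    have : |g t - y₀| < ε' := abs_lt.2 ⟨by linarith, by linarith⟩
    have hεε : ε' ≤ ε / 2 := min_le_left _ _
    calc |g t - g x| = |g t - y₀| := by rw [hy₀]
      _ < ε' := this
      _ < ε := by linarith
  -- derivative
  have hFd : HasDerivAt F (2 * (y₀ - 1) / y₀ ^ 2) (g x) := hasDerivAt_F hy0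
  have hne : 2 * (y₀ - 1) / y₀ ^ 2 ≠ 0 := by
    apply ne_of_lt
    apply div_neg_of_neg_of_pos (by nlinarith) (by positivity)
  have hev : ∀ᶠ t in 𝓝 x, F (g t) = t := by
    filter_upwards [eventually_gt_nhds hx] with t ht
    exact hFg t ht.le
  have hgd : HasDerivAt g ((2 * (y₀ - 1) / y₀ ^ 2)⁻¹) x :=
    hFd.of_local_left_inverse hcont hne hev
  have hval : (2 * (y₀ - 1) / y₀ ^ 2)⁻¹ = y₀ ^ 2 / (2 * (y₀ - 1)) := by
    rw [inv_div]
  rw [hval] at hgd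
  have hderiv : deriv g x = y₀ ^ 2 / (2 * (y₀ - 1)) := hgd.deriv
  refine ⟨hgd, ?_, ?_⟩
  · rw [hderiv]
    apply div_neg_of_pos_of_neg (by positivity) (by nlinarith)
  · rw [hderiv]
    have h1 : y₀ ≠ 0 := hy0.ne'
    have h2 : y₀ - 1 ≠ 0 := by linarith
    field_simp
end

section
/- As x → 0+, one has (1 − g(x))/√x → 1; that is, g(x) = 1 − √x + o(√x) near x = 0. -/
open Real Filter

lemma ineqA : ∀ y ∈ Set.Ioc (0:ℝ) 1, (1-y)^2/2 ≤ y⁻¹ + Real.log y - 1 := by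
  set h : ℝ → ℝ := fun y => y⁻¹ + Real.log y - 1 - (1-y)^2/2 with hh
  have hanti : AntitoneOn h (Set.Ioc 0 1) := by
    apply antitoneOn_of_deriv_nonpos (convex_Ioc 0 1)
    · apply ContinuousOn.sub
      apply ContinuousOn.sub
      apply ContinuousOn.add
      · exact continuousOn_inv₀.mono (fun y hy => ne_of_gt hy.1)
      · exact fun y hy => (Real.continuousAt_log (ne_of_gt hy.1)).continuousWithinAt
      · exact continuousOn_const
      · fun_prop
    · rw [interior_Ioc]
      intro y hy
      have hy0 : (0:ℝ) < y := hy.1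
      have hd : HasDerivAt h (-(y^2)⁻¹ + y⁻¹ - (2*(1-y)^1*(-1))/2) y := by
        have h1 : HasDerivAt (fun y : ℝ => y⁻¹) (-(y^2)⁻¹) y := by
          simpa using hasDerivAt_inv hy0.ne'
        have h2 := Real.hasDerivAt_log hy0.ne'
        have h3 : HasDerivAt (fun y : ℝ => (1-y)^2/2) ((2*(1-y)^1*(-1))/2) y := by
          exact (((hasDerivAt_id y).const_sub 1).pow 2).div_const 2
        exact (((h1.add h2).sub_const 1).sub h3)
      exact hd.differentiableAt.differentiableWithinAt
    · rw [interior_Ioc]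
      intro y hy
      have hy0 : (0:ℝ) < y := hy.1
      have hy1 : y < 1 := hy.2
      have hd : HasDerivAt h (-(y^2)⁻¹ + y⁻¹ - (2*(1-y)^1*(-1))/2) y := by
        have h1 : HasDerivAt (fun y : ℝ => y⁻¹) (-(y^2)⁻¹) y := by
          simpa using hasDerivAt_inv hy0.ne'
        have h2 := Real.hasDerivAt_log hy0.ne'
        have h3 : HasDerivAt (fun y : ℝ => (1-y)^2/2) ((2*(1-y)^1*(-1))/2) y := by
          exact (((hasDerivAt_id y).const_sub 1).pow 2).div_const 2
        exact (((h1.add h2).sub_const 1).sub h3)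
      rw [hd.deriv]
      have hne : y ≠ 0 := hy0.ne'
      have key : -(y^2)⁻¹ + y⁻¹ - (2*(1-y)^1*(-1))/2 = (-((1-y)^2*(1+y)))/y^2 := by
        field_simp
        ring
      rw [key]
      apply div_nonpos_of_nonpos_of_nonneg
      · nlinarith [sq_nonneg (1-y)]
      · positivity
  intro y hy
  have := hanti hy (Set.right_mem_Ioc.2 one_pos) hy.2
  simp [hh, Real.log_one] at this
  linarith

lemma ineqB : ∀ y ∈ Set.Ioc (0:ℝ) 1, y⁻¹ + Real.log y - 1 ≤ (y⁻¹-1)^2/2 := by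
  set h : ℝ → ℝ := fun y => (y⁻¹-1)^2/2 - (y⁻¹ + Real.log y - 1) with hh
  have hanti : AntitoneOn h (Set.Ioc 0 1) := by
    apply antitoneOn_of_deriv_nonpos (convex_Ioc 0 1)
    · apply ContinuousOn.sub
      · apply ContinuousOn.div_const
        apply ContinuousOn.pow
        apply ContinuousOn.sub _ continuousOn_const
        exact continuousOn_inv₀.mono (fun y hy => ne_of_gt hy.1)
      · apply ContinuousOn.sub _ continuousOn_const
        apply ContinuousOn.add
        · exact continuousOn_inv₀.mono (fun y hy => ne_of_gt hy.1)
        · exact fun y hy => (Real.continuousAt_log (ne_of_gt hy.1)).continuousWithinAt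
    all_goals rw [interior_Ioc]
    · intro y hy
      have hy0 : (0:ℝ) < y := hy.1
      have hd : HasDerivAt h ((2*(y⁻¹-1)^1*(-(y^2)⁻¹))/2 - (-(y^2)⁻¹ + y⁻¹)) y := by
        have h1 : HasDerivAt (fun y : ℝ => y⁻¹) (-(y^2)⁻¹) y := by
          simpa using hasDerivAt_inv hy0.ne'
        have h2 := Real.hasDerivAt_log hy0.ne'
        exact (((h1.sub_const 1).pow 2).div_const 2).sub ((h1.add h2).sub_const 1)
      exact hd.differentiableAt.differentiableWithinAt
    · intro y hy
      have hy0 : (0:ℝ) < y := hy.1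
      have hy1 : y < 1 := hy.2
      have hd : HasDerivAt h ((2*(y⁻¹-1)^1*(-(y^2)⁻¹))/2 - (-(y^2)⁻¹ + y⁻¹)) y := by
        have h1 : HasDerivAt (fun y : ℝ => y⁻¹) (-(y^2)⁻¹) y := by
          simpa using hasDerivAt_inv hy0.ne'
        have h2 := Real.hasDerivAt_log hy0.ne'
        exact (((h1.sub_const 1).pow 2).div_const 2).sub ((h1.add h2).sub_const 1)
      rw [hd.deriv]
      have hne : y ≠ 0 := hy0.ne'
      have key : (2*(y⁻¹-1)^1*(-(y^2)⁻¹))/2 - (-(y^2)⁻¹ + y⁻¹) = (-((1-y)^2))/y^3 := by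
        field_simp
        ring
      rw [key]
      apply div_nonpos_of_nonpos_of_nonneg
      · nlinarith [sq_nonneg (1-y)]
      · positivity
  intro y hy
  have := hanti hy (Set.right_mem_Ioc.2 one_pos) hy.2
  simp [hh, Real.log_one] at this
  linarith

/-- As `x → 0⁺`, `(1 − g(x))/√x → 1`, i.e. `g(x) = 1 − √x + o(√x)` near `0`. -/
theorem stmt_4 (g : ℝ → ℝ)
    (hg : ∀ x : ℝ, 0 ≤ x →
      g x ∈ Set.Ioc (0 : ℝ) 1 ∧ 1 / g x + Real.log (g x) = 1 + x / 2) :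
    Tendsto (fun x : ℝ => (1 - g x) / Real.sqrt x) (nhdsWithin 0 (Set.Ioi 0)) (nhds 1) := by
  have hlow : Tendsto (fun x : ℝ => 1 - Real.sqrt x) (nhdsWithin 0 (Set.Ioi 0)) (nhds 1) := by
    have : Tendsto (fun x : ℝ => 1 - Real.sqrt x) (nhds 0) (nhds 1) := by
      have hc : Continuous (fun x : ℝ => 1 - Real.sqrt x) :=
        continuous_const.sub Real.continuous_sqrt
      simpa using hc.tendsto 0
    exact this.mono_left nhdsWithin_le_nhds
  apply tendsto_of_tendsto_of_tendsto_of_le_of_le' hlow tendsto_const_nhds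
  · filter_upwards [self_mem_nhdsWithin] with x hx
    have hx0 : (0:ℝ) < x := hx
    obtain ⟨hmem, heq⟩ := hg x hx0.le
    set y := g x with hy
    have hy0 : (0:ℝ) < y := hmem.1
    have hy1 : y ≤ 1 := hmem.2
    have hF : y⁻¹ + Real.log y - 1 = x/2 := by rw [← one_div]; linarith
    have hs : (0:ℝ) < Real.sqrt x := Real.sqrt_pos.2 hx0
    -- 1 - y ≤ sqrt x
    have hA := ineqA y hmem
    have h1 : (1-y)^2 ≤ x := by rw [hF] at hA; linarith
    have h2 : 1 - y ≤ Real.sqrt x := by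
      calc 1 - y ≤ |1-y| := le_abs_self _
        _ = Real.sqrt ((1-y)^2) := (Real.sqrt_sq_eq_abs _).symm
        _ ≤ Real.sqrt x := Real.sqrt_le_sqrt h1
    -- sqrt x ≤ (1-y)/y
    have hB := ineqB y hmem
    have h3 : x ≤ (y⁻¹-1)^2 := by rw [hF] at hB; linarith
    have h4 : Real.sqrt x ≤ y⁻¹ - 1 := by
      have hnn : 0 ≤ y⁻¹ - 1 := by
        rw [sub_nonneg, le_inv_comm₀ one_pos hy0]; simpa using hy1
      calc Real.sqrt x ≤ Real.sqrt ((y⁻¹-1)^2) := Real.sqrt_le_sqrt h3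
        _ = |y⁻¹-1| := Real.sqrt_sq_eq_abs _
        _ = y⁻¹ - 1 := abs_of_nonneg hnn
    -- so y * sqrt x ≤ 1 - y, hence (1-y)/sqrt x ≥ y ≥ 1 - sqrt x
    have h5 : y * Real.sqrt x ≤ 1 - y := by
      have := mul_le_mul_of_nonneg_left h4 hy0.le
      rw [mul_sub, mul_inv_cancel₀ hy0.ne'] at this
      linarith
    have h6 : y ≤ (1-y)/Real.sqrt x := by
      rw [le_div_iff₀ hs]; linarith [h5]
    linarith [h2, h6]
  · filter_upwards [self_mem_nhdsWithin] with x hx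
    have hx0 : (0:ℝ) < x := hx
    obtain ⟨hmem, heq⟩ := hg x hx0.le
    set y := g x with hy
    have hy0 : (0:ℝ) < y := hmem.1
    have hy1 : y ≤ 1 := hmem.2
    have hF : y⁻¹ + Real.log y - 1 = x/2 := by rw [← one_div]; linarith
    have hs : (0:ℝ) < Real.sqrt x := Real.sqrt_pos.2 hx0
    have hA := ineqA y hmem
    have h1 : (1-y)^2 ≤ x := by rw [hF] at hA; linarith
    have h2 : 1 - y ≤ Real.sqrt x := by
      calc 1 - y ≤ |1-y| := le_abs_self _
        _ = Real.sqrt ((1-y)^2) := (Real.sqrt_sq_eq_abs _).symm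
        _ ≤ Real.sqrt x := Real.sqrt_le_sqrt h1
    rw [div_le_one hs]
    exact h2
end

section
/- Define f₀(x) = 2(1/g(x) − 1) for x ≥ 0. Then f₀(0) = 0 and f₀(x)/√x → 2 as x → 0+; that is, f₀(x) ∼ 2√x near x = 0. -/
open Real Filter


lemma aux_nonneg (F F' : ℝ → ℝ)
    (hd : ∀ u : ℝ, 0 ≤ u → HasDerivAt F (F' u) u)
    (h0 : F 0 = 0) (hnn : ∀ u : ℝ, 0 ≤ u → 0 ≤ F' u) :
    ∀ u : ℝ, 0 ≤ u → 0 ≤ F u := by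
  intro u hu
  have hm : MonotoneOn F (Set.Ici (0:ℝ)) := by
    apply monotoneOn_of_deriv_nonneg (convex_Ici 0)
    · exact fun v hv => (hd v hv).continuousAt.continuousWithinAt
    · intro v hv
      rw [interior_Ici] at hv
      exact (hd v (le_of_lt hv)).differentiableAt.differentiableWithinAt
    · intro v hv
      rw [interior_Ici] at hv
      rw [(hd v (le_of_lt hv)).deriv]
      exact hnn v (le_of_lt hv)
  calc (0:ℝ) = F 0 := h0.symm
    _ ≤ F u := hm (Set.self_mem_Ici) hu hu

lemma hd_log (u : ℝ) (hu : 0 ≤ u) :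
    HasDerivAt (fun v : ℝ => Real.log (1+v)) (1+u)⁻¹ u := by
  have h1 : HasDerivAt (fun v : ℝ => 1+v) 1 u := (hasDerivAt_id u).const_add 1
  simpa [Function.comp_def] using (Real.hasDerivAt_log (by linarith : (1:ℝ)+u ≠ 0)).comp u h1

lemma logA (u : ℝ) (hu : 0 ≤ u) : u - u^2/2 ≤ Real.log (1+u) := by
  have := aux_nonneg (fun v => Real.log (1+v) - (v - v^2/2)) (fun v => v^2/(1+v))
    (fun v hv => by
      have h2 : HasDerivAt (fun w : ℝ => w - w^2/2) (1 - v) v := by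
        have := ((hasDerivAt_id v).sub (((hasDerivAt_id v).pow 2).div_const 2))
        simpa [Pi.sub_def] using this
      have := (hd_log v hv).sub h2
      refine this.congr_deriv ?_
      field_simp
      ring)
    (by simp)
    (fun v hv => by positivity)
    u hu
  simpa using this

lemma logB (u : ℝ) (hu : 0 ≤ u) : Real.log (1+u) ≤ u - u^2/2 + u^3/3 := by
  have := aux_nonneg (fun v => v - v^2/2 + v^3/3 - Real.log (1+v)) (fun v => v^3/(1+v))
    (fun v hv => by
      have h2 : HasDerivAt (fun w : ℝ => w - w^2/2 + w^3/3) (1 - v + v^2) v := by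
        have := (((hasDerivAt_id v).sub (((hasDerivAt_id v).pow 2).div_const 2)).add
          (((hasDerivAt_id v).pow 3).div_const 3))
        refine this.congr_deriv ?_
        simp
      have := h2.sub (hd_log v hv)
      refine this.congr_deriv ?_
      field_simp
      ring)
    (by simp)
    (fun v hv => by positivity)
    u hu
  simpa using this

lemma logC (u : ℝ) (hu : 0 ≤ u) : Real.log (1+u) ≤ u - u^2/(2*(1+u)) := by
  have := aux_nonneg (fun v => v - v^2/(2*(1+v)) - Real.log (1+v))
    (fun v => v^2/(2*(1+v)^2))
    (fun v hv => by
      have hne : (2:ℝ)*(1+v) ≠ 0 := by positivity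
      have h2 : HasDerivAt (fun w : ℝ => w^2/(2*(1+w)))
          ((2*v*(2*(1+v)) - v^2*2)/(2*(1+v))^2) v := by
        have := ((hasDerivAt_id v).pow 2).div
          (((hasDerivAt_id v).const_add 1).const_mul 2) hne
        refine this.congr_deriv ?_
        simp
      have := ((hasDerivAt_id v).sub h2).sub (hd_log v hv)
      refine this.congr_deriv ?_
      field_simp
      ring)
    (by simp)
    (fun v hv => by positivity)
    u hu
  linarith [this]

/-- With `f₀(x) = 2(1/g(x) − 1)`, one has `f₀(0) = 0` and `f₀(x)/√x → 2` as `x → 0⁺`,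
i.e. `f₀(x) ∼ 2√x` near `0`. -/
theorem stmt_5 (g : ℝ → ℝ)
    (hg : ∀ x : ℝ, 0 ≤ x →
      g x ∈ Set.Ioc (0 : ℝ) 1 ∧ 1 / g x + Real.log (g x) = 1 + x / 2)
    (f₀ : ℝ → ℝ) (hf₀ : ∀ x : ℝ, f₀ x = 2 * (1 / g x - 1)) :
    f₀ 0 = 0 ∧
    Tendsto (fun x : ℝ => f₀ x / Real.sqrt x) (nhdsWithin 0 (Set.Ioi 0)) (nhds 2) := by
  -- g 0 = 1
  obtain ⟨hg0mem, hg0eq⟩ := hg 0 le_rfl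
  have hg0pos : (0:ℝ) < g 0 := hg0mem.1
  have hg01 : g 0 = 1 := by
    by_contra h
    have hne : Real.log (g 0) ≠ 0 := by
      intro h0
      have := Real.exp_log hg0pos
      rw [h0, Real.exp_zero] at this
      exact h this.symm
    have hlt := Real.add_one_lt_exp (neg_ne_zero.mpr hne)
    rw [Real.exp_neg, Real.exp_log hg0pos, ← one_div] at hlt
    linarith [hg0eq]
  constructor
  · rw [hf₀, hg01]; norm_num
  -- the limit
  set u : ℝ → ℝ := fun x => 1 / g x - 1 with hu_def
  have key : ∀ x : ℝ, 0 < x → 0 < u x ∧ u x - Real.log (1 + u x) = x / 2 := by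
    intro x hx
    obtain ⟨⟨hy1, hy2⟩, heq⟩ := hg x hx.le
    have hun : 0 ≤ u x := by
      have : 1 ≤ 1 / g x := by rw [le_div_iff₀ hy1]; linarith
      simp only [hu_def]; linarith
    have hlog : Real.log (1 + u x) = - Real.log (g x) := by
      have : (1:ℝ) + u x = (g x)⁻¹ := by
        simp only [hu_def, one_div]; ring
      rw [this, Real.log_inv]
    have heq2 : u x - Real.log (1 + u x) = x / 2 := by
      rw [hlog]
      simp only [hu_def]
      linarith [heq]
    refine ⟨?_, heq2⟩
    rcases lt_or_eq_of_le hun with h | h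
    · exact h
    · exfalso
      rw [← h] at heq2
      simp at heq2
      linarith
  clear_value u
  -- key inequalities
  have hA : ∀ x : ℝ, 0 < x → x ≤ (u x)^2 := by
    intro x hx
    obtain ⟨hup, heq⟩ := key x hx
    have h := logA (u x) hup.le
    nlinarith [h, heq]
  have hB : ∀ x : ℝ, 0 < x → (u x)^2 - 2*(u x)^3/3 ≤ x := by
    intro x hx
    obtain ⟨hup, heq⟩ := key x hx
    have := logB (u x) hup.le
    linarith
  have hC : ∀ x : ℝ, 0 < x → (u x)^2 ≤ x * (1 + u x) := by
    intro x hx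
    obtain ⟨hup, heq⟩ := key x hx
    have h1 := logC (u x) hup.le
    have h2 : (u x)^2/(2*(1+u x)) ≤ x/2 := by linarith
    rw [div_le_div_iff₀ (by positivity) (by norm_num)] at h2
    nlinarith
  -- u tends to 0
  have hu0 : Tendsto u (nhdsWithin 0 (Set.Ioi 0)) (nhds 0) := by
    apply tendsto_of_tendsto_of_tendsto_of_le_of_le'
      (tendsto_const_nhds : Tendsto (fun _ : ℝ => (0:ℝ)) _ _)
      (show Tendsto (fun x : ℝ => 2 * Real.sqrt x) (nhdsWithin 0 (Set.Ioi 0)) (nhds 0) by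
        have : Tendsto (fun x : ℝ => 2 * Real.sqrt x) (nhds 0) (nhds (2 * Real.sqrt 0)) :=
          (Real.continuous_sqrt.tendsto 0).const_mul 2
        simpa using this.mono_left nhdsWithin_le_nhds)
    · filter_upwards [self_mem_nhdsWithin] with x hx
      exact (key x hx).1.le
    · filter_upwards [self_mem_nhdsWithin,
        Ioo_mem_nhdsGT_of_mem (by norm_num : (0:ℝ) ∈ Set.Ico 0 (1/4))] with x hx hx4
      have hx' : 0 < x := hx
      obtain ⟨hup, heq⟩ := key x hx'
      have hCx := hC x hx'
      have hs := Real.sq_sqrt hx'.le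
      have hsn := Real.sqrt_nonneg x
      have h1 : u x ≤ Real.sqrt x * (1 + u x) := by
        nlinarith [sq_nonneg (u x - Real.sqrt x * (1 + u x)), sq_nonneg (u x + Real.sqrt x * (1 + u x))]
      have h2 : Real.sqrt x < 1/2 := by
        have : Real.sqrt x < Real.sqrt (1/4) := Real.sqrt_lt_sqrt hx'.le hx4.2
        rw [show (1:ℝ)/4 = (1/2)^2 by norm_num, Real.sqrt_sq (by norm_num)] at this
        exact this
      nlinarith
  -- squeeze the ratio
  have hratio : ∀ x : ℝ, 0 < x → f₀ x / Real.sqrt x = 2 * u x / Real.sqrt x := by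
    intro x hx
    rw [hf₀]
    simp only [hu_def]
  have hlow : ∀ᶠ x in nhdsWithin 0 (Set.Ioi 0), 2 ≤ f₀ x / Real.sqrt x := by
    filter_upwards [self_mem_nhdsWithin] with x hx
    have hx' : (0:ℝ) < x := hx
    obtain ⟨hup, heq⟩ := key x hx'
    have hsq : Real.sqrt x ≤ u x := by
      have := Real.sqrt_le_sqrt (hA x hx')
      rwa [Real.sqrt_sq hup.le] at this
    have hsp : 0 < Real.sqrt x := Real.sqrt_pos.mpr hx'
    rw [hratio x hx', le_div_iff₀ hsp]
    linarith
  have hupfun : Tendsto (fun x : ℝ => 2 / Real.sqrt (1 - 2 * u x / 3))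
      (nhdsWithin 0 (Set.Ioi 0)) (nhds 2) := by
    have hc : ContinuousAt (fun t : ℝ => 2 / Real.sqrt (1 - 2 * t / 3)) 0 := by
      apply ContinuousAt.div continuousAt_const
      · exact Real.continuous_sqrt.continuousAt.comp (by fun_prop)
      · norm_num
    have := hc.tendsto.comp hu0
    simpa [Function.comp_def] using this
  have hhigh : ∀ᶠ x in nhdsWithin 0 (Set.Ioi 0),
      f₀ x / Real.sqrt x ≤ 2 / Real.sqrt (1 - 2 * u x / 3) := by
    have hsmall : ∀ᶠ x in nhdsWithin 0 (Set.Ioi 0), u x < 1/2 := by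
      have := hu0.eventually (eventually_lt_nhds (by norm_num : (0:ℝ) < 1/2))
      exact this
    filter_upwards [self_mem_nhdsWithin, hsmall] with x hx hxs
    have hx' : (0:ℝ) < x := hx
    obtain ⟨hup, heq⟩ := key x hx'
    have hden : (0:ℝ) < 1 - 2 * u x / 3 := by linarith
    have hBx := hB x hx'
    have h1 : (u x * Real.sqrt (1 - 2 * u x / 3))^2 ≤ x := by
      rw [mul_pow, Real.sq_sqrt hden.le]
      nlinarith
    have h2 : u x * Real.sqrt (1 - 2 * u x / 3) ≤ Real.sqrt x := by
      have := Real.sqrt_le_sqrt h1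
      rwa [Real.sqrt_sq (by positivity)] at this
    have hsp : 0 < Real.sqrt x := Real.sqrt_pos.mpr hx'
    have hdp : 0 < Real.sqrt (1 - 2 * u x / 3) := Real.sqrt_pos.mpr hden
    rw [hratio x hx', div_le_div_iff₀ hsp hdp]
    nlinarith
  exact tendsto_of_tendsto_of_tendsto_of_le_of_le' tendsto_const_nhds hupfun hlow hhigh
end

section
/- For each real b ≥ 1 there is a unique a(b) ∈ [1,∞) with a(b) − log(a(b)) = b, and a(b) − b − log b → 0 as b → ∞. Consequently, 1/g(x) − (1 + x/2) − log(1 + x/2) → 0 as x → ∞, i.e. g(x) ≈ 1/(1 + x/2 + log(1 + x/2)) for large x. -/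
open Real Filter

lemma aux_log_le_half (t : ℝ) (ht : 1 ≤ t) : Real.log t ≤ t / 2 := by
  have hs : Real.sqrt t ^ 2 = t := Real.sq_sqrt (by linarith)
  have hsp : 0 < Real.sqrt t := Real.sqrt_pos.2 (by linarith)
  have h1 : Real.log t = 2 * Real.log (Real.sqrt t) := by
    rw [← hs, Real.log_pow]; push_cast; rw [hs]
  have h2 : Real.log (Real.sqrt t) ≤ Real.sqrt t - 1 :=
    Real.log_le_sub_one_of_pos hsp
  nlinarith [sq_nonneg (Real.sqrt t - 2)]

lemma aux_strictMono : StrictMonoOn (fun a : ℝ => a - Real.log a) (Set.Ici 1) := by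
  intro x hx y hy hxy
  simp only [Set.mem_Ici] at hx hy
  have hx0 : (0:ℝ) < x := by linarith
  have hy0 : (0:ℝ) < y := by linarith
  have h1 : Real.log (y / x) < y / x - 1 :=
    Real.log_lt_sub_one_of_pos (by positivity) (by
      intro h
      have : y = x := by field_simp at h; linarith
      linarith)
  rw [Real.log_div (by linarith) (by linarith)] at h1
  have h2 : y / x - 1 ≤ y - x := by
    rw [div_sub_one (by linarith)]
    rw [div_le_iff₀ hx0]
    nlinarith
  simp only
  linarith

lemma aux_exists_unique (b : ℝ) (hb : 1 ≤ b) :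
    ∃! a : ℝ, a ∈ Set.Ici (1 : ℝ) ∧ a - Real.log a = b := by
  have h12b : (1:ℝ) ≤ 2 * b := by linarith
  have hcont : ContinuousOn (fun a : ℝ => a - Real.log a) (Set.Icc 1 (2*b)) := by
    intro x hx
    have hx0 : (0:ℝ) < x := by have := hx.1; linarith
    exact ((continuousAt_id).sub (Real.continuousAt_log hx0.ne')).continuousWithinAt
  have hmem : b ∈ Set.Icc ((fun a : ℝ => a - Real.log a) 1)
      ((fun a : ℝ => a - Real.log a) (2*b)) := by
    constructor
    · simp [Real.log_one]; linarith
    · have := aux_log_le_half (2*b) h12b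
      simp only
      linarith
  obtain ⟨a, ha, hfa⟩ := intermediate_value_Icc h12b hcont hmem
  refine ⟨a, ⟨ha.1, hfa⟩, ?_⟩
  rintro c ⟨hc1, hc2⟩
  simp only at hfa
  exact aux_strictMono.injOn hc1 ha.1 (show c - Real.log c = a - Real.log a by rw [hc2, hfa])

lemma aux_tendsto (a : ℝ → ℝ)
    (ha : ∀ b : ℝ, 1 ≤ b → a b ∈ Set.Ici (1 : ℝ) ∧ a b - Real.log (a b) = b) :
    Tendsto (fun b : ℝ => a b - b - Real.log b) atTop (nhds 0) := by
  have key : ∀ b : ℝ, 1 ≤ b →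
      0 ≤ a b - b - Real.log b ∧ a b - b - Real.log b ≤ Real.log (2*b) / b := by
    intro b hb
    obtain ⟨ha1, hab⟩ := ha b hb
    simp only [Set.mem_Ici] at ha1
    have hb0 : (0:ℝ) < b := by linarith
    have hla : 0 ≤ Real.log (a b) := Real.log_nonneg ha1
    have hba : b ≤ a b := by linarith
    have hdiff : a b - b = Real.log (a b) := by linarith
    have hup : a b ≤ 2 * b := by
      have := aux_log_le_half (a b) ha1
      linarith
    have hl2b : 0 ≤ Real.log (2*b) := Real.log_nonneg (by linarith)
    constructor
    · have : Real.log b ≤ Real.log (a b) := Real.log_le_log hb0 hba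
      linarith
    · -- a b ≤ b + log (2b) = b * (1 + log(2b)/b)
      have hub2 : a b ≤ b + Real.log (2*b) := by
        have : Real.log (a b) ≤ Real.log (2*b) := Real.log_le_log (by linarith) hup
        linarith
      set u : ℝ := Real.log (2*b) / b with hu
      have hu0 : 0 ≤ u := div_nonneg hl2b hb0.le
      have hfac : b + Real.log (2*b) = b * (1 + u) := by
        rw [hu, mul_add, mul_one, mul_div_assoc', mul_comm b, mul_div_assoc, div_self hb0.ne', mul_one]
      have hloga : Real.log (a b) ≤ Real.log b + Real.log (1 + u) := by
        calc Real.log (a b) ≤ Real.log (b * (1 + u)) :=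
              Real.log_le_log (by linarith) (by rw [← hfac]; exact hub2)
          _ = Real.log b + Real.log (1 + u) :=
              Real.log_mul hb0.ne' (by positivity)
      have hlog1u : Real.log (1 + u) ≤ u := by
        have := Real.log_le_sub_one_of_pos (show (0:ℝ) < 1 + u by linarith)
        linarith
      linarith
  have hupper : Tendsto (fun b : ℝ => Real.log (2*b) / b) atTop (nhds 0) := by
    have h1 : Tendsto (fun b : ℝ => Real.log 2 / b) atTop (nhds 0) :=
      tendsto_const_nhds.div_atTop tendsto_id
    have h2 : Tendsto (fun b : ℝ => Real.log b / b) atTop (nhds 0) :=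
      Real.isLittleO_log_id_atTop.tendsto_div_nhds_zero
    have := h1.add h2
    rw [add_zero] at this
    refine this.congr' ?_
    filter_upwards [eventually_ge_atTop (1:ℝ)] with b hb
    have hb0 : (0:ℝ) < b := by linarith
    rw [Real.log_mul (by norm_num) hb0.ne']
    ring
  have hlower : Tendsto (fun _ : ℝ => (0:ℝ)) atTop (nhds 0) := tendsto_const_nhds
  refine tendsto_of_tendsto_of_tendsto_of_le_of_le' hlower hupper ?_ ?_
  · filter_upwards [eventually_ge_atTop (1:ℝ)] with b hb using (key b hb).1
  · filter_upwards [eventually_ge_atTop (1:ℝ)] with b hb using (key b hb).2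

/-- For each `b ≥ 1` there is a unique `a(b) ∈ [1,∞)` with `a(b) − log (a b) = b`, and
`a(b) − b − log b → 0` as `b → ∞`. Consequently
`1/g(x) − (1 + x/2) − log (1 + x/2) → 0` as `x → ∞`. -/
theorem stmt_6 (g : ℝ → ℝ)
    (hg : ∀ x : ℝ, 0 ≤ x →
      g x ∈ Set.Ioc (0 : ℝ) 1 ∧ 1 / g x + Real.log (g x) = 1 + x / 2) :
    (∀ b : ℝ, 1 ≤ b → ∃! a : ℝ, a ∈ Set.Ici (1 : ℝ) ∧ a - Real.log a = b) ∧
    (∀ a : ℝ → ℝ,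
      (∀ b : ℝ, 1 ≤ b → a b ∈ Set.Ici (1 : ℝ) ∧ a b - Real.log (a b) = b) →
      Tendsto (fun b : ℝ => a b - b - Real.log b) atTop (nhds 0)) ∧
    Tendsto (fun x : ℝ => 1 / g x - (1 + x / 2) - Real.log (1 + x / 2)) atTop (nhds 0) := by
  refine ⟨aux_exists_unique, aux_tendsto, ?_⟩
  have hAspec : ∀ b : ℝ, 1 ≤ b →
      (fun b : ℝ => 1 / g (2*(b-1))) b ∈ Set.Ici (1:ℝ) ∧
      (fun b : ℝ => 1 / g (2*(b-1))) b -
        Real.log ((fun b : ℝ => 1 / g (2*(b-1))) b) = b := by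
    intro b hb
    have hx : (0:ℝ) ≤ 2*(b-1) := by linarith
    obtain ⟨⟨hg0, hg1⟩, heq⟩ := hg _ hx
    refine ⟨?_, ?_⟩
    · exact one_le_one_div hg0 hg1
    · simp only
      rw [one_div, Real.log_inv]
      rw [one_div] at heq
      have : (1:ℝ) + 2*(b-1)/2 = b := by ring
      linarith
  have hAT := aux_tendsto _ hAspec
  have hcomp : Tendsto (fun x : ℝ => 1 + x/2) atTop atTop := by
    apply tendsto_atTop_add_const_left
    exact (tendsto_id (α := ℝ)).atTop_div_const (by norm_num)
  have heq : (fun x : ℝ => 1 / g x - (1 + x/2) - Real.log (1 + x/2)) =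
      (fun b : ℝ => (fun b : ℝ => 1 / g (2*(b-1))) b - b - Real.log b) ∘
        (fun x : ℝ => 1 + x/2) := by
    funext x
    simp only [Function.comp]
    have h : 2*((1 + x/2) - 1) = x := by ring
    rw [h]
  rw [heq]
  exact hAT.comp hcomp
end

section
/- With f₀(x) = 2(1/g(x) − 1), one has f₀(x) − x − 2·log(1 + x/2) → 0 as x → ∞. -/
open Real Filter

/-- With `f₀(x) = 2(1/g(x) − 1)`, one has `f₀(x) − x − 2 log(1 + x/2) → 0` as `x → ∞`. -/
theorem stmt_7 (g : ℝ → ℝ)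
    (hg : ∀ x : ℝ, 0 ≤ x →
      g x ∈ Set.Ioc (0 : ℝ) 1 ∧ 1 / g x + Real.log (g x) = 1 + x / 2)
    (f₀ : ℝ → ℝ) (hf₀ : ∀ x : ℝ, f₀ x = 2 * (1 / g x - 1)) :
    Tendsto (fun x : ℝ => f₀ x - x - 2 * Real.log (1 + x / 2)) atTop (nhds 0) := by
  -- First: g x → 0 at top
  have hgle : ∀ᶠ x : ℝ in atTop, g x ≤ 1 / (1 + x / 2) := by
    filter_upwards [eventually_ge_atTop (0 : ℝ)] with x hx
    obtain ⟨⟨hg0, hg1⟩, heq⟩ := hg x hx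
    have hlog : Real.log (g x) ≤ 0 := Real.log_nonpos hg0.le hg1
    have h1 : 1 + x / 2 ≤ 1 / g x := by linarith
    have hu : (0 : ℝ) < 1 + x / 2 := by linarith
    rw [le_div_iff₀ hu]
    calc g x * (1 + x / 2) ≤ g x * (1 / g x) := by
          exact mul_le_mul_of_nonneg_left h1 hg0.le
      _ = 1 := by field_simp
  have hgpos : ∀ᶠ x : ℝ in atTop, 0 < g x := by
    filter_upwards [eventually_ge_atTop (0 : ℝ)] with x hx
    exact (hg x hx).1.1
  have hg0 : Tendsto g atTop (nhds 0) := by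
    refine tendsto_of_tendsto_of_tendsto_of_le_of_le' tendsto_const_nhds ?_
      (hgpos.mono fun x hx => hx.le) hgle
    have : Tendsto (fun x : ℝ => 1 + x / 2) atTop atTop := by
      apply tendsto_atTop_add_const_left
      exact (tendsto_id.atTop_div_const (by norm_num))
    simpa [Pi.inv_def] using this.inv_tendsto_atTop
  -- g x * log (g x) → 0
  have hmul : Tendsto (fun x => g x * Real.log (g x)) atTop (nhds 0) := by
    have := (continuous_mul_log.tendsto 0).comp hg0
    simpa [Function.comp_def] using this
  -- Key rewriting: eventually the function equals -2 * log (1 + g x * log (g x))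
  have hEq : ∀ᶠ x : ℝ in atTop,
      f₀ x - x - 2 * Real.log (1 + x / 2)
        = -2 * Real.log (1 + g x * Real.log (g x)) := by
    filter_upwards [eventually_ge_atTop (0 : ℝ)] with x hx
    obtain ⟨⟨hg0x, hg1x⟩, heq⟩ := hg x hx
    have hu : (0 : ℝ) < 1 + x / 2 := by linarith
    have hinv : 1 / g x = 1 + x / 2 - Real.log (g x) := by linarith
    have hprod : g x * (1 + x / 2) = 1 + g x * Real.log (g x) := by
      have : g x * (1 / g x + Real.log (g x)) = g x * (1 + x / 2) := by rw [heq]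
      have hgx : g x * (1 / g x) = 1 := by field_simp
      nlinarith [this, hgx]
    have hlogs : Real.log (g x) + Real.log (1 + x / 2)
        = Real.log (1 + g x * Real.log (g x)) := by
      rw [← Real.log_mul hg0x.ne' hu.ne', hprod]
    rw [hf₀ x, hinv]
    linarith [hlogs]
  rw [tendsto_congr' hEq]
  have hcont : Tendsto (fun t : ℝ => -2 * Real.log (1 + t)) (nhds 0) (nhds 0) := by
    have : ContinuousAt (fun t : ℝ => -2 * Real.log (1 + t)) 0 := by
      have h1 : ContinuousAt Real.log 1 := Real.continuousAt_log (by norm_num)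
      have h2 : ContinuousAt (fun t : ℝ => (1 + t : ℝ)) 0 := by fun_prop
      have : ContinuousAt (fun t : ℝ => Real.log (1 + t)) 0 := by
        have := ContinuousAt.comp (f := fun t : ℝ => (1 + t : ℝ)) (g := Real.log)
          (x := 0) (by simpa using h1) h2
        simpa [Function.comp_def] using this
      exact this.const_smul (-2 : ℝ)
    simpa using this.tendsto
  exact hcont.comp hmul
end

section
/- Fix M > 0, α ∈ (0, 1/2), c > 0, and ε ∈ (0, M). Set λ = 2(1+c)/c^{2α}, A' = c^{2α+1}·e^{λε}/(2(1+c)²), and D = ε + (M−ε)/(1+c) + A'(e^{−λε} − e^{−λM}). Define g on [0, M] by g(x) = D − x for 0 ≤ x ≤ ε, and g(x) = (M−x)/(1+c) + A'(e^{−λx} − e^{−λM}) for ε ≤ x ≤ M. Then g is continuously differentiable on [0, M] (the two pieces and their first derivatives agree at x = ε), g(M) = 0, g'(x) + 1 = 0 for x ∈ (0, ε), and (1+c)·g'(x) + (c^{2α}/2)·g''(x) + 1 = 0 for x ∈ (ε, M). -/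
open Real Filter

/-- For `M > 0`, `α ∈ (0, 1/2)`, `c > 0`, `ε ∈ (0, M)`, with
`λ = 2(1+c)/c^(2α)`, `A' = c^(2α+1) e^(λε)/(2(1+c)²)`, and
`D = ε + (M−ε)/(1+c) + A'(e^(−λε) − e^(−λM))`, the function `g` equal to `D − x` on
`[0, ε]` and to `(M−x)/(1+c) + A'(e^(−λx) − e^(−λM))` on `[ε, M]` is continuously
differentiable on `[0, M]` (the two pieces and their first derivatives agree at `ε`),
`g(M) = 0`, `g'(x) + 1 = 0` on `(0, ε)`, and
`(1+c) g'(x) + (c^(2α)/2) g''(x) + 1 = 0` on `(ε, M)`. -/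
theorem stmt_15 (M α c ε lam A' D : ℝ) (g : ℝ → ℝ)
    (hM : 0 < M) (hα : α ∈ Set.Ioo (0 : ℝ) (1 / 2)) (hc : 0 < c)
    (hε : ε ∈ Set.Ioo (0 : ℝ) M)
    (hlam : lam = 2 * (1 + c) / c ^ (2 * α : ℝ))
    (hA' : A' = c ^ (2 * α + 1 : ℝ) * Real.exp (lam * ε) / (2 * (1 + c) ^ 2))
    (hD : D = ε + (M - ε) / (1 + c) + A' * (Real.exp (-lam * ε) - Real.exp (-lam * M)))
    (hgdef : ∀ x : ℝ, g x =
      if x ≤ ε then D - x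
      else (M - x) / (1 + c) + A' * (Real.exp (-lam * x) - Real.exp (-lam * M))) :
    (D - ε = (M - ε) / (1 + c) + A' * (Real.exp (-lam * ε) - Real.exp (-lam * M))) ∧
    (deriv (fun x : ℝ => D - x) ε =
      deriv (fun x : ℝ => (M - x) / (1 + c) +
        A' * (Real.exp (-lam * x) - Real.exp (-lam * M))) ε) ∧
    ContDiffOn ℝ 1 g (Set.Icc 0 M) ∧
    g M = 0 ∧
    (∀ x ∈ Set.Ioo (0 : ℝ) ε, deriv g x + 1 = 0) ∧
    (∀ x ∈ Set.Ioo ε M,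
      (1 + c) * deriv g x + (c ^ (2 * α : ℝ) / 2) * deriv (deriv g) x + 1 = 0) := by
  have hc1 : (0:ℝ) < 1 + c := by linarith
  have hc1' : (1:ℝ) + c ≠ 0 := ne_of_gt hc1
  have hcp : (0:ℝ) < c ^ (2 * α : ℝ) := Real.rpow_pos_of_pos hc _
  have hcp' : c ^ (2 * α : ℝ) ≠ 0 := ne_of_gt hcp
  have hsplit : c ^ (2 * α + 1 : ℝ) = c ^ (2 * α : ℝ) * c := by
    rw [Real.rpow_add hc, Real.rpow_one]
  have hlamA : lam * A' = c * Real.exp (lam * ε) / (1 + c) := by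
    rw [hA', hsplit, hlam]; field_simp
  have key : lam * A' * Real.exp (-lam * ε) = c / (1 + c) := by
    rw [hlamA, div_mul_eq_mul_div, mul_assoc, ← Real.exp_add]
    ring_nf
    rw [Real.exp_zero]
    ring
  set h₂ : ℝ → ℝ := fun x => (M - x) / (1 + c) +
      A' * (Real.exp (-lam * x) - Real.exp (-lam * M)) with hh₂
  have dh₂ : ∀ x : ℝ, HasDerivAt h₂ (-1 / (1 + c) + A' * (-lam * Real.exp (-lam * x))) x := by
    intro x
    have d1 : HasDerivAt (fun x : ℝ => (M - x) / (1 + c)) (-1 / (1 + c)) x := by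
      simpa using ((hasDerivAt_id x).const_sub M).div_const (1 + c)
    have d2 : HasDerivAt (fun x : ℝ => Real.exp (-lam * x)) (-lam * Real.exp (-lam * x)) x := by
      have h := (Real.hasDerivAt_exp (-lam * x)).comp x ((hasDerivAt_id x).const_mul (-lam))
      simpa [Function.comp_def, mul_comm] using h
    have d3 : HasDerivAt (fun x : ℝ => Real.exp (-lam * x) - Real.exp (-lam * M))
        (-lam * Real.exp (-lam * x)) x := d2.sub_const _
    exact d1.add (d3.const_mul A')
  have h2e : -1 / (1 + c) + A' * (-lam * Real.exp (-lam * ε)) = -1 := by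
    have h : A' * (-lam * Real.exp (-lam * ε)) = -(c / (1 + c)) := by
      rw [← key]; ring
    rw [h]; field_simp; ring
  have hcont : D - ε = (M - ε) / (1 + c) + A' * (Real.exp (-lam * ε) - Real.exp (-lam * M)) := by
    rw [hD]; ring
  set G : ℝ → ℝ := fun x => if x ≤ ε then -1 else
      -1 / (1 + c) + A' * (-lam * Real.exp (-lam * x)) with hG
  have hgIic : ∀ y ∈ Set.Iic ε, g y = D - y := by
    intro y hy; rw [hgdef y, if_pos (Set.mem_Iic.mp hy)]
  have hgIci : ∀ y ∈ Set.Ici ε, g y = h₂ y := by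
    intro y hy
    rcases eq_or_lt_of_le (Set.mem_Ici.mp hy) with h | h
    · rw [hgdef y, ← h, if_pos le_rfl, hh₂]
      simpa using hcont
    · rw [hgdef y, if_neg (not_le.mpr h)]
  have hg' : ∀ x : ℝ, HasDerivAt g (G x) x := by
    intro x
    rcases lt_trichotomy x ε with h | h | h
    · have heq : g =ᶠ[nhds x] fun y => D - y := by
        filter_upwards [Iio_mem_nhds h] with y hy
        exact hgIic y (Set.mem_Iic.mpr hy.le)
      have hd : HasDerivAt (fun y : ℝ => D - y) (-1) x := by
        simpa using (hasDerivAt_id x).const_sub D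
      have := hd.congr_of_eventuallyEq heq
      simpa [hG, if_pos h.le] using this
    · subst h
      have hL : HasDerivWithinAt g (-1) (Set.Iic x) x := by
        have hd : HasDerivAt (fun y : ℝ => D - y) (-1) x := by
          simpa using (hasDerivAt_id x).const_sub D
        exact (hd.hasDerivWithinAt).congr hgIic (hgIic x Set.self_mem_Iic)
      have hR : HasDerivWithinAt g (-1) (Set.Ici x) x := by
        have hd := (dh₂ x).hasDerivWithinAt (s := Set.Ici x)
        rw [h2e] at hd
        exact hd.congr hgIci (hgIci x Set.self_mem_Ici)
      have hu := hL.union hR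
      rw [Set.Iic_union_Ici, hasDerivWithinAt_univ] at hu
      simpa [hG] using hu
    · have heq : g =ᶠ[nhds x] h₂ := by
        filter_upwards [Ioi_mem_nhds h] with y hy
        exact hgIci y (Set.mem_Ici.mpr hy.le)
      have hd := (dh₂ x).congr_of_eventuallyEq heq
      simpa [hG, if_neg (not_le.mpr h)] using hd
  have hderiv : deriv g = G := funext fun x => (hg' x).deriv
  have hGcont : Continuous G := by
    apply Continuous.if_le
    · exact continuous_const
    · exact continuous_const.add (continuous_const.mul
        (continuous_const.mul (Real.continuous_exp.comp (continuous_const.mul continuous_id))))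
    · exact continuous_id
    · exact continuous_const
    · intro x hx; rw [hx]; exact h2e.symm
  have hCD : ContDiff ℝ 1 g := by
    rw [contDiff_one_iff_deriv]
    exact ⟨fun x => (hg' x).differentiableAt, hderiv ▸ hGcont⟩
  refine ⟨hcont, ?_, hCD.contDiffOn, ?_, ?_, ?_⟩
  · have e1 : deriv (fun x : ℝ => D - x) ε = -1 := by
      have hd : HasDerivAt (fun y : ℝ => D - y) (-1) ε := by
        simpa using (hasDerivAt_id ε).const_sub D
      exact hd.deriv
    have e2 : deriv h₂ ε = -1 := by rw [(dh₂ ε).deriv, h2e]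
    rw [e1]; exact e2.symm
  · rw [hgdef M, if_neg (not_le.mpr hε.2)]
    simp
  · intro x hx
    rw [hderiv, hG]
    simp [if_pos hx.2.le]
  · intro x hx
    have hGx : deriv g x = -1 / (1 + c) + A' * (-lam * Real.exp (-lam * x)) := by
      rw [hderiv, hG]; simp [if_neg (not_le.mpr hx.1)]
    have hG'' : deriv (deriv g) x = A' * (lam * lam * Real.exp (-lam * x)) := by
      rw [hderiv]
      have heq : G =ᶠ[nhds x] fun y => -1 / (1 + c) + A' * (-lam * Real.exp (-lam * y)) := by
        filter_upwards [Ioi_mem_nhds hx.1] with y hy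
        rw [hG]; simp [if_neg (not_le.mpr (Set.mem_Ioi.mp hy))]
      have d2 : HasDerivAt (fun y : ℝ => Real.exp (-lam * y)) (-lam * Real.exp (-lam * x)) x := by
        have h := (Real.hasDerivAt_exp (-lam * x)).comp x ((hasDerivAt_id x).const_mul (-lam))
        simpa [Function.comp_def, mul_comm] using h
      have d3 : HasDerivAt (fun y : ℝ => -1 / (1 + c) + A' * (-lam * Real.exp (-lam * y)))
          (A' * (lam * lam * Real.exp (-lam * x))) x := by
        have hd := ((d2.const_mul (-lam)).const_mul A').const_add (-1 / (1 + c))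
        rw [show A' * (lam * lam * Real.exp (-lam * x)) = A' * (-lam * (-lam * Real.exp (-lam * x))) by ring]
        exact hd
      exact (d3.congr_of_eventuallyEq heq).deriv
    rw [hGx, hG'']
    have hlam' : c ^ (2 * α : ℝ) * lam = 2 * (1 + c) := by
      rw [hlam]; field_simp
    field_simp
    linear_combination (A' * lam * Real.exp (-(lam * x))) * hlam'
end

section
/- Fix M > 0 and α ∈ (0, 1/2). For c > 0 put ε(c) = 1/(1+c), λ(c) = 2(1+c)/c^{2α}, A'(c) = c^{2α+1}·e^{λ(c)ε(c)}/(2(1+c)²), and D(c) = ε(c) + (M−ε(c))/(1+c) + A'(c)·(e^{−λ(c)ε(c)} − e^{−λ(c)M}). Then A'(c) → 0 and D(c) → 0 as c → ∞. (D(c) is the expected time to reach M from 0 under the strategy f = 0 on [0, ε(c)], f = c on (ε(c), M]; hence the optimal expected retirement time is 0 when α < 1/2.) -/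
open Real Filter

/-- For `M > 0` and `α ∈ (0, 1/2)`, with `ε(c) = 1/(1+c)`, `λ(c) = 2(1+c)/c^(2α)`,
`A'(c) = c^(2α+1) e^(λ(c)ε(c)) / (2(1+c)²)` and
`D(c) = ε(c) + (M−ε(c))/(1+c) + A'(c)(e^(−λ(c)ε(c)) − e^(−λ(c)M))`, one has
`A'(c) → 0` and `D(c) → 0` as `c → ∞`. -/
theorem stmt_16 (M α : ℝ) (hM : 0 < M) (hα : α ∈ Set.Ioo (0 : ℝ) (1 / 2))
    (ε lam A' D : ℝ → ℝ)
    (hε : ∀ c : ℝ, ε c = 1 / (1 + c))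
    (hlam : ∀ c : ℝ, lam c = 2 * (1 + c) / c ^ (2 * α : ℝ))
    (hA' : ∀ c : ℝ, A' c = c ^ (2 * α + 1 : ℝ) * Real.exp (lam c * ε c) / (2 * (1 + c) ^ 2))
    (hD : ∀ c : ℝ, D c = ε c + (M - ε c) / (1 + c) +
      A' c * (Real.exp (-lam c * ε c) - Real.exp (-lam c * M))) :
    Tendsto A' atTop (nhds 0) ∧ Tendsto D atTop (nhds 0) := by
  obtain ⟨hα0, hα2⟩ := hα
  have h0 : Tendsto (fun c : ℝ => 1 + c) atTop atTop :=
    tendsto_atTop_add_const_left _ 1 tendsto_id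
  have hinv : Tendsto (fun c : ℝ => 1 / (1 + c)) atTop (nhds 0) := by
    simpa [one_div, Pi.inv_def] using h0.inv_tendsto_atTop
  have hεlim : Tendsto ε atTop (nhds 0) := by
    simpa [funext hε] using hinv
  -- lam c * ε c → 0
  have hL : Tendsto (fun c => lam c * ε c) atTop (nhds 0) := by
    have hbase : Tendsto (fun c : ℝ => 2 * c ^ (-(2 * α) : ℝ)) atTop (nhds 0) := by
      simpa using (tendsto_rpow_neg_atTop (by linarith : (0:ℝ) < 2 * α)).const_mul 2
    refine hbase.congr' ?_
    filter_upwards [eventually_gt_atTop (0:ℝ)] with c hc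
    have h1c : (1 : ℝ) + c ≠ 0 := by linarith
    have hcp : (0:ℝ) < c ^ (2 * α : ℝ) := rpow_pos_of_pos hc _
    rw [hlam, hε, Real.rpow_neg hc.le]
    field_simp
  have hexpL : Tendsto (fun c => Real.exp (lam c * ε c)) atTop (nhds 1) := by
    simpa [Function.comp_def] using (Real.continuous_exp.tendsto 0).comp hL
  have hexpnegL : Tendsto (fun c => Real.exp (-lam c * ε c)) atTop (nhds 1) := by
    have hLn : Tendsto (fun c => -(lam c * ε c)) atTop (nhds 0) := by simpa using hL.neg
    have h3 := (Real.continuous_exp.tendsto 0).comp hLn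
    simp only [Function.comp_def] at h3
    simpa [neg_mul] using h3
  -- lam → atTop
  have hlamTop : Tendsto lam atTop atTop := by
    have hb : Tendsto (fun c : ℝ => 2 * c ^ (1 - 2 * α : ℝ)) atTop atTop :=
      (tendsto_rpow_atTop (by linarith : (0:ℝ) < 1 - 2 * α)).const_mul_atTop two_pos
    refine tendsto_atTop_mono' _ ?_ hb
    filter_upwards [eventually_ge_atTop (1:ℝ)] with c hc
    have hc0 : (0:ℝ) < c := by linarith
    have hcp : (0:ℝ) < c ^ (2 * α : ℝ) := rpow_pos_of_pos hc0 _
    rw [hlam]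
    rw [show (1 - 2 * α : ℝ) = 1 + -(2 * α) by ring, Real.rpow_add hc0,
      Real.rpow_one, Real.rpow_neg hc0.le]
    rw [div_eq_mul_inv]
    have : c ≤ 1 + c := by linarith
    have h2 : 2 * c ≤ 2 * (1 + c) := by linarith
    calc 2 * (c * (c ^ (2 * α : ℝ))⁻¹) = 2 * c * (c ^ (2 * α : ℝ))⁻¹ := by ring
      _ ≤ 2 * (1 + c) * (c ^ (2 * α : ℝ))⁻¹ := by
          exact mul_le_mul_of_nonneg_right h2 (inv_nonneg.mpr hcp.le)
  have hexpM : Tendsto (fun c => Real.exp (-lam c * M)) atTop (nhds 0) := by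
    have h1 : Tendsto (fun c => lam c * M) atTop atTop := Tendsto.atTop_mul_const hM hlamTop
    have h2 : Tendsto (fun c => -(lam c * M)) atTop atBot := tendsto_neg_atTop_atBot.comp h1
    have h3 := Real.tendsto_exp_atBot.comp h2
    simp only [Function.comp_def] at h3
    simpa [neg_mul] using h3
  -- c/(1+c) → 1
  have hfrac : Tendsto (fun c : ℝ => c / (1 + c)) atTop (nhds 1) := by
    have : Tendsto (fun c : ℝ => 1 - 1 / (1 + c)) atTop (nhds 1) := by
      simpa using tendsto_const_nhds.sub hinv
    refine this.congr' ?_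
    filter_upwards [eventually_gt_atTop (0:ℝ)] with c hc
    have h1c : (1 : ℝ) + c ≠ 0 := by linarith
    field_simp
    ring
  have hfrac2 : Tendsto (fun c : ℝ => (c / (1 + c)) ^ 2) atTop (nhds 1) := by
    simpa using hfrac.pow 2
  -- c^(2α-1) → 0
  have hneg : Tendsto (fun c : ℝ => c ^ (2 * α - 1 : ℝ)) atTop (nhds 0) := by
    have := tendsto_rpow_neg_atTop (by linarith : (0:ℝ) < 1 - 2 * α)
    rw [show -(1 - 2 * α) = 2 * α - 1 by ring] at this
    exact this
  -- A' → 0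
  have hA'lim : Tendsto A' atTop (nhds 0) := by
    have key : Tendsto
        (fun c : ℝ => c ^ (2 * α - 1 : ℝ) * ((c / (1 + c)) ^ 2 * Real.exp (lam c * ε c)) / 2)
        atTop (nhds 0) := by
      simpa using (hneg.mul (hfrac2.mul hexpL)).div_const 2
    refine key.congr' ?_
    filter_upwards [eventually_gt_atTop (0:ℝ)] with c hc
    have h1c : (1 : ℝ) + c ≠ 0 := by linarith
    have h2 : c ^ (2 * α + 1 : ℝ) = c ^ (2 * α - 1 : ℝ) * c ^ 2 := by
      rw [← Real.rpow_natCast c 2, ← Real.rpow_add hc]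
      congr 1
      push_cast
      ring
    rw [hA', h2]
    field_simp
  refine ⟨hA'lim, ?_⟩
  have hD2 : Tendsto (fun c => (M - ε c) / (1 + c)) atTop (nhds 0) :=
    Tendsto.div_atTop (by simpa using tendsto_const_nhds.sub hεlim) h0
  have hterm3 : Tendsto (fun c => A' c * (Real.exp (-lam c * ε c) - Real.exp (-lam c * M)))
      atTop (nhds 0) := by
    simpa using hA'lim.mul (hexpnegL.sub hexpM)
  have := (hεlim.add hD2).add hterm3
  simp only [add_zero, zero_add] at this
  exact this.congr fun c => (hD c).symm
end

section
/- Fix 0 ≤ x ≤ M. Then A²·∫_{x/A²}^{M/A²} g(u) du → M − x as A → ∞, where g is the function from the α = 1, A = 1 model. (Equivalently, the optimal expected retirement time V(x; A; α = 1) = A²·V(x/A²; A = 1; M/A²) converges to the no-investment value M − x as the volatility parameter A tends to infinity.) -/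
open Real Filter MeasureTheory intervalIntegral

private lemma fanti_aux {a b : ℝ} (ha0 : 0 < a) (hb1 : b ≤ 1) (hab : a < b) :
    1 / b + Real.log b < 1 / a + Real.log a := by
  have hb0 : 0 < b := ha0.trans hab
  have h1 : Real.log (b / a) < b / a - 1 := by
    apply Real.log_lt_sub_one_of_pos (div_pos hb0 ha0)
    intro h
    rw [div_eq_one_iff_eq ha0.ne'] at h
    exact hab.ne' h
  have h2 : Real.log (b / a) = Real.log b - Real.log a := Real.log_div hb0.ne' ha0.ne'
  have h3 : b / a - 1 ≤ 1 / a - 1 / b := by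
    have key : (b / a - 1) - (1 / a - 1 / b) = (b - a) * (b - 1) / (a * b) := by
      field_simp
    have hnum : (b - a) * (b - 1) ≤ 0 :=
      mul_nonpos_of_nonneg_of_nonpos (by linarith) (by linarith)
    have hq : (b - a) * (b - 1) / (a * b) ≤ 0 :=
      div_nonpos_of_nonpos_of_nonneg hnum (mul_pos ha0 hb0).le
    linarith [key ▸ hq]
  linarith

private lemma g_lower_aux {y u : ℝ} (hy0 : 0 < y) (hy1 : y ≤ 1)
    (heq : 1 / y + Real.log y = 1 + u / 2) (hu : 0 ≤ u) :
    1 - (2 * Real.sqrt u + u) ≤ y := by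
  have hs0 : 0 < 1 / y := by positivity
  have hs1 : 1 ≤ 1 / y := by rw [le_div_iff₀ hy0]; linarith
  set s := 1 / y with hsdef
  have hlogy : Real.log y = -Real.log s := by
    rw [hsdef, Real.log_div one_ne_zero hy0.ne', Real.log_one]; ring
  have hsr0 : 0 < Real.sqrt s := Real.sqrt_pos.mpr hs0
  have hlogs : Real.log s ≤ 2 * (Real.sqrt s - 1) := by
    have h1 : Real.log (Real.sqrt s) ≤ Real.sqrt s - 1 := Real.log_le_sub_one_of_pos hsr0
    have h2 : Real.log (Real.sqrt s) = Real.log s / 2 := Real.log_sqrt hs0.le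
    linarith
  have hsq : Real.sqrt s ^ 2 = s := Real.sq_sqrt hs0.le
  have h4 : (Real.sqrt s - 1) ^ 2 ≤ u / 2 := by nlinarith
  have h5 : Real.sqrt s - 1 ≤ Real.sqrt u := by
    have h6 : Real.sqrt s - 1 ≤ Real.sqrt (u / 2) := by
      rcases le_or_gt (Real.sqrt s - 1) 0 with h | h
      · exact h.trans (Real.sqrt_nonneg _)
      · exact (Real.le_sqrt h.le (by linarith)).mpr h4
    have h7 : Real.sqrt (u / 2) ≤ Real.sqrt u := Real.sqrt_le_sqrt (by linarith)
    linarith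
  have hru : Real.sqrt u ^ 2 = u := Real.sq_sqrt hu
  have hs_le : s ≤ 1 + (2 * Real.sqrt u + u) := by nlinarith [Real.sqrt_nonneg u]
  have hy : y = 1 / s := by rw [hsdef]; field_simp
  rw [hy]
  rcases le_or_gt (1 - (2 * Real.sqrt u + u)) 0 with h | h
  · exact h.trans (by positivity)
  · rw [le_div_iff₀ hs0]
    nlinarith [mul_le_mul_of_nonneg_left hs_le h.le, Real.sqrt_nonneg u]

private lemma gmono_aux (g : ℝ → ℝ)
    (hg : ∀ u : ℝ, 0 ≤ u →
      g u ∈ Set.Ioc (0 : ℝ) 1 ∧ 1 / g u + Real.log (g u) = 1 + u / 2)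
    {u v : ℝ} (hu : 0 ≤ u) (huv : u ≤ v) : g v ≤ g u := by
  obtain ⟨⟨hu0, hu1⟩, hueq⟩ := hg u hu
  obtain ⟨⟨hv0, hv1⟩, hveq⟩ := hg v (hu.trans huv)
  by_contra h
  push_neg at h
  have hlt := fanti_aux hu0 hv1 h
  rw [hueq, hveq] at hlt
  linarith

/-- For fixed `0 ≤ x ≤ M`,
`A² ∫_{x/A²}^{M/A²} g(u) du → M − x` as `A → ∞`, where `g` is the function of the
`α = 1`, `A = 1` model; i.e. `V(x; A; α = 1) = A² V(x/A²; A = 1; M/A²) → M − x`. -/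
theorem stmt_17 (g : ℝ → ℝ)
    (hg : ∀ u : ℝ, 0 ≤ u →
      g u ∈ Set.Ioc (0 : ℝ) 1 ∧ 1 / g u + Real.log (g u) = 1 + u / 2)
    (M x : ℝ) (hx : 0 ≤ x) (hxM : x ≤ M) :
    Tendsto (fun A : ℝ => A ^ 2 * ∫ u in (x / A ^ 2)..(M / A ^ 2), g u)
      atTop (nhds (M - x)) := by
  rw [← tendsto_sub_nhds_zero_iff]
  apply squeeze_zero_norm'
    (a := fun A : ℝ => M * (2 * Real.sqrt (M / A ^ 2) + M / A ^ 2))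
  · filter_upwards [eventually_ge_atTop (1 : ℝ)] with A hA
    have hA0 : (0 : ℝ) < A := by linarith
    have hA2 : (0 : ℝ) < A ^ 2 := by positivity
    set a := x / A ^ 2 with hadef
    set b := M / A ^ 2 with hbdef
    have ha0 : 0 ≤ a := by positivity
    have hab : a ≤ b := by rw [hadef, hbdef]; gcongr
    have hb0 : 0 ≤ b := ha0.trans hab
    have hbM : A ^ 2 * b = M := by rw [hbdef]; field_simp
    have haX : A ^ 2 * a = x := by rw [hadef]; field_simp
    set c := 2 * Real.sqrt b + b with hcdef
    have hc0 : 0 ≤ c := by positivity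
    have hmem : ∀ t ∈ Set.Icc a b, 0 ≤ t := fun t ht => le_trans ha0 ht.1
    have hint_g : IntervalIntegrable g volume a b := by
      apply AntitoneOn.intervalIntegrable
      intro s hs t ht hst
      rw [Set.uIcc_of_le hab] at hs ht
      exact gmono_aux g hg (hmem s hs) hst
    have hup : (∫ u in a..b, g u) ≤ ∫ u in a..b, (1 : ℝ) := by
      apply intervalIntegral.integral_mono_on hab hint_g intervalIntegrable_const
      intro t ht
      exact ((hg t (hmem t ht)).1).2
    have hlo : (∫ u in a..b, (1 - c : ℝ)) ≤ ∫ u in a..b, g u := by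
      apply intervalIntegral.integral_mono_on hab intervalIntegrable_const hint_g
      intro t ht
      obtain ⟨⟨h0, h1⟩, heq⟩ := hg t (hmem t ht)
      have hlow := g_lower_aux h0 h1 heq (hmem t ht)
      have hst : Real.sqrt t ≤ Real.sqrt b := Real.sqrt_le_sqrt ht.2
      rw [hcdef]
      linarith [ht.2]
    rw [intervalIntegral.integral_const] at hup
    rw [intervalIntegral.integral_const] at hlo
    simp only [smul_eq_mul, mul_one] at hup hlo
    have hMx : M - x = A ^ 2 * b - A ^ 2 * a := by rw [hbM, haX]
    rw [Real.norm_eq_abs, abs_le]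
    have P1 := mul_le_mul_of_nonneg_left hlo hA2.le
    have P2 := mul_le_mul_of_nonneg_left hup hA2.le
    have P3 : 0 ≤ A ^ 2 * a * c := by positivity
    have P4 : 0 ≤ A ^ 2 * b * c := by positivity
    have E : M * c = A ^ 2 * b * c := by rw [hbM]
    constructor <;> nlinarith [P1, P2, P3, P4, E, hMx]
  · have h1 : Tendsto (fun A : ℝ => M / A ^ 2) atTop (nhds 0) :=
      Tendsto.div_atTop tendsto_const_nhds (tendsto_pow_atTop two_ne_zero)
    have h2 : Continuous (fun t : ℝ => M * (2 * Real.sqrt t + t)) := by continuity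
    have h3 := (h2.tendsto 0).comp h1
    simpa [Function.comp_def] using h3
end
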